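/- arXiv:1002.2246 — 4 statements merged into one kernel-verified Lean document; each statement's English description precedes it below -/
import Mathlib

section
/- For a reversible irreducible finite Markov chain, hitting times satisfy the cycle identity: for any three states i, j, k, H(i,j) + H(j,k) + H(k,i) = H(i,k) + H(k,j) + H(j,i). -/
open Finset

/-- For a finite irreducible Markov chain that is reversible with respect to a
(positive) stationary distribution `π`, the hitting times `H` (characterized by
their harmonic system) satisfy the cycle identity
`H(i,j) + H(j,k) + H(k,i) = H(i,k) + H(k,j) + H(j,i)`. -/
theorem reversible_cycle_identity (n : ℕ) (hn : 0 < n)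
    (P : Matrix (Fin n) (Fin n) ℝ)
    (hnn : ∀ i j, 0 ≤ P i j) (hrow : ∀ i, ∑ j, P i j = 1)
    (hirr : ∀ i j, ∃ k : ℕ, 0 < (P ^ k) i j)
    (π : Fin n → ℝ) (hπpos : ∀ i, 0 < π i) (hπsum : ∑ i, π i = 1)
    (hstat : ∀ j, ∑ i, π i * P i j = π j)
    (hrev : ∀ i j, π i * P i j = π j * P j i)
    (H : Fin n → Fin n → ℝ)
    (hH0 : ∀ j, H j j = 0)
    (hH : ∀ i j, i ≠ j → H i j = 1 + ∑ k, P i k * H k j) :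
    ∀ i j k, H i j + H j k + H k i = H i k + H k j + H j i := by
  have hπne : ∀ a, π a ≠ 0 := fun a => (hπpos a).ne'
  -- Return time lemma: ∑ k, P a k * H k a = (1 - π a) / π a
  have hret : ∀ a, ∑ k, P a k * H k a = (1 - π a) / π a := by
    intro a
    have h3 : ∑ i, (π i * (1 + ∑ k, P i k * H k a) - π i * H i a)
        = π a * (1 + ∑ k, P a k * H k a) := by
      rw [Finset.sum_eq_single a]
      · rw [hH0 a]; ring
      · intro i _ hi
        rw [hH i a hi]; ring
      · intro h; exact absurd (Finset.mem_univ a) h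
    have hswap : ∑ i, π i * ∑ k, P i k * H k a = ∑ k, π k * H k a := by
      calc ∑ i, π i * ∑ k, P i k * H k a
          = ∑ i, ∑ k, π i * P i k * H k a := by
            refine Finset.sum_congr rfl fun i _ => ?_
            rw [Finset.mul_sum]
            refine Finset.sum_congr rfl fun k _ => by ring
        _ = ∑ k, ∑ i, π i * P i k * H k a := Finset.sum_comm
        _ = ∑ k, π k * H k a := by
            refine Finset.sum_congr rfl fun k _ => ?_
            rw [← Finset.sum_mul, hstat k]
    have h4 : ∑ i, (π i * (1 + ∑ k, P i k * H k a) - π i * H i a) = 1 := by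
      calc ∑ i, (π i * (1 + ∑ k, P i k * H k a) - π i * H i a)
          = ∑ i, (π i + (π i * ∑ k, P i k * H k a - π i * H i a)) := by
            refine Finset.sum_congr rfl fun i _ => by ring
        _ = ∑ i, π i + ∑ i, (π i * ∑ k, P i k * H k a - π i * H i a) :=
            Finset.sum_add_distrib
        _ = 1 + (∑ i, π i * ∑ k, P i k * H k a - ∑ i, π i * H i a) := by
            rw [hπsum, Finset.sum_sub_distrib]
        _ = 1 := by rw [hswap]; ring
    have h5 : π a * (1 + ∑ k, P a k * H k a) = 1 := by rw [← h3, h4]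
    rw [eq_div_iff (hπne a)]
    nlinarith [h5]
  -- Symmetry of the Dirichlet form (reversibility)
  have hsym : ∀ u v : Fin n → ℝ,
      ∑ i, π i * u i * (v i - ∑ k, P i k * v k)
      = ∑ i, π i * v i * (u i - ∑ k, P i k * u k) := by
    intro u v
    have key : ∑ i, ∑ k, π i * u i * (P i k * v k)
        = ∑ i, ∑ k, π i * v i * (P i k * u k) := by
      rw [Finset.sum_comm]
      refine Finset.sum_congr rfl fun x _ => Finset.sum_congr rfl fun y _ => ?_
      have h := hrev y x
      linear_combination (u y * v x) * h
    have expand : ∀ (f g : Fin n → ℝ),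
        ∑ i, π i * f i * (g i - ∑ k, P i k * g k)
        = ∑ i, π i * f i * g i - ∑ i, ∑ k, π i * f i * (P i k * g k) := by
      intro f g
      rw [← Finset.sum_sub_distrib]
      refine Finset.sum_congr rfl fun i _ => ?_
      rw [mul_sub, Finset.mul_sum]
    rw [expand, expand, key]
    congr 1
    exact Finset.sum_congr rfl fun i _ => by ring
  -- Key lemma: ψ(a) - ψ(b) = H b a - H a b
  have hkey : ∀ x y, (∑ i, π i * H i x) - (∑ i, π i * H i y) = H y x - H x y := by
    intro x y
    by_cases hxy : x = y
    · subst hxy; ring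
    · have hyx : y ≠ x := fun h => hxy h.symm
      set G : Fin n → ℝ := fun i => H i x - H i y with hG
      set w : Fin n → ℝ := fun i => H i x with hw
      have hsab := hsym G w
      have hwval : ∀ i, i ≠ x → w i - ∑ k, P i k * w k = 1 := by
        intro i hi
        have := hH i x hi
        simp only [hw]
        linarith
      have hwa : w x - ∑ k, P x k * w k = 1 - 1 / π x := by
        simp only [hw, hH0 x, hret x]
        rw [sub_div, div_self (hπne x)]
        ring
      have hL : ∑ i, π i * G i * (w i - ∑ k, P i k * w k)
          = ∑ i, π i * G i - G x := by
        have hz : ∑ i, (π i * G i * (w i - ∑ k, P i k * w k) - π i * G i) = -G x := by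
          rw [Finset.sum_eq_single x]
          · rw [hwa]; field_simp [hπne x]; ring
          · intro i _ hi; rw [hwval i hi]; ring
          · intro h; exact absurd (Finset.mem_univ x) h
        rw [Finset.sum_sub_distrib] at hz
        linarith
      have hGsum : ∀ i, ∑ k, P i k * G k
          = (∑ k, P i k * H k x) - (∑ k, P i k * H k y) := by
        intro i
        rw [← Finset.sum_sub_distrib]
        refine Finset.sum_congr rfl fun k _ => ?_
        simp only [hG]; ring
      have hR : ∑ i, π i * w i * (G i - ∑ k, P i k * G k) = H y x := by
        have h0 : ∀ c ∈ Finset.univ, c ≠ y →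
            π c * w c * (G c - ∑ k, P c k * G k) = 0 := by
          intro c _ hcy
          by_cases hcx : c = x
          · subst hcx; simp [hw, hH0 c]
          · rw [hGsum c]
            have h1 : ∑ k, P c k * H k x = H c x - 1 := by
              have := hH c x hcx; linarith
            have h2 : ∑ k, P c k * H k y = H c y - 1 := by
              have := hH c y hcy; linarith
            rw [h1, h2]
            simp only [hG]; ring
        rw [Finset.sum_eq_single y h0 (fun h => absurd (Finset.mem_univ y) h)]
        have h1 : ∑ k, P y k * H k x = H y x - 1 := by
          have := hH y x hyx; linarith
        rw [hGsum y, h1, hret y]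
        simp only [hG, hw, hH0 y]
        field_simp [hπne y]
        ring
      have hGa : G x = -H x y := by simp only [hG, hH0 x]; ring
      have hGsplit : ∑ i, π i * G i
          = (∑ i, π i * H i x) - (∑ i, π i * H i y) := by
        rw [← Finset.sum_sub_distrib]
        refine Finset.sum_congr rfl fun i _ => ?_
        simp only [hG]; ring
      rw [hL, hR] at hsab
      rw [← hGsplit]
      linarith
  intro i j k
  have h1 := hkey j i
  have h2 := hkey k j
  have h3 := hkey i k
  linarith
end

section
/- Consider two tokens placed on a fixed undirected connected graph G on N vertices; at each time step one of the two tokens is chosen uniformly at random and the chosen token moves to a uniformly random neighbor. Then the meeting time M (maximum over starting pairs of the expected time for the tokens to first occupy the same vertex) satisfies M ≤ 2N·H_SF − N, where H_SF is the maximum hitting time of the simple random walk on G. -/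
open Finset

namespace MeetingAux

variable {N : ℕ} (G : SimpleGraph (Fin N)) [DecidableRel G.Adj]

/-- average of `f` over the neighbors of `x` -/
noncomputable def avg (x : Fin N) (f : Fin N → ℝ) : ℝ :=
  ∑ k ∈ G.neighborFinset x, (1 / (G.degree x : ℝ)) * f k

/-- total degree -/
noncomputable def twoE : ℝ := ∑ v : Fin N, (G.degree v : ℝ)

variable {G}

lemma dcast_pos {x : Fin N} (hd : 0 < G.degree x) : (0:ℝ) < (G.degree x : ℝ) := by
  exact_mod_cast hd

lemma avg_const {x : Fin N} (hd : 0 < G.degree x) (c : ℝ) :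
    avg G x (fun _ => c) = c := by
  have h0 : ((G.degree x : ℝ)) ≠ 0 := ne_of_gt (dcast_pos hd)
  simp only [avg, Finset.sum_const, G.card_neighborFinset_eq_degree, nsmul_eq_mul]
  field_simp

lemma avg_add (x : Fin N) (f g : Fin N → ℝ) :
    avg G x (fun k => f k + g k) = avg G x f + avg G x g := by
  simp [avg, mul_add, Finset.sum_add_distrib]

lemma avg_sub (x : Fin N) (f g : Fin N → ℝ) :
    avg G x (fun k => f k - g k) = avg G x f - avg G x g := by
  simp [avg, mul_sub, Finset.sum_sub_distrib]

lemma avg_smul (x : Fin N) (c : ℝ) (f : Fin N → ℝ) :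
    avg G x (fun k => c * f k) = c * avg G x f := by
  simp only [avg, Finset.mul_sum]
  exact Finset.sum_congr rfl (fun k _ => by ring)

lemma avg_congr (x : Fin N) {f g : Fin N → ℝ} (h : ∀ k, G.Adj x k → f k = g k) :
    avg G x f = avg G x g := by
  refine Finset.sum_congr rfl (fun k hk => ?_)
  rw [h k ((G.mem_neighborFinset x k).1 hk)]

lemma avg_le_avg (x : Fin N) {f g : Fin N → ℝ} (h : ∀ k, G.Adj x k → f k ≤ g k) :
    avg G x f ≤ avg G x g := by
  refine Finset.sum_le_sum (fun k hk => ?_)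
  have := h k ((G.mem_neighborFinset x k).1 hk)
  have hnn : (0:ℝ) ≤ 1 / (G.degree x : ℝ) := by positivity
  exact mul_le_mul_of_nonneg_left this hnn

lemma avg_le_const {x : Fin N} (hd : 0 < G.degree x) {f : Fin N → ℝ} {c : ℝ}
    (h : ∀ k, G.Adj x k → f k ≤ c) : avg G x f ≤ c := by
  calc avg G x f ≤ avg G x (fun _ => c) := avg_le_avg x h
  _ = c := avg_const hd c

lemma const_le_avg {x : Fin N} (hd : 0 < G.degree x) {f : Fin N → ℝ} {c : ℝ}
    (h : ∀ k, G.Adj x k → c ≤ f k) : c ≤ avg G x f := by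
  calc c = avg G x (fun _ => c) := (avg_const hd c).symm
  _ ≤ avg G x f := avg_le_avg x h

/-- extracting the value of an indicator at one point -/
lemma avg_ite (x b : Fin N) (c : ℝ) :
    avg G x (fun k => if k = b then c else 0)
      = if b ∈ G.neighborFinset x then (1 / (G.degree x : ℝ)) * c else 0 := by
  simp only [avg, mul_ite, mul_zero]
  exact Finset.sum_ite_eq' _ b (fun _ => (1 / (G.degree x : ℝ)) * c)

/-- swapping two averages -/
lemma avg_avg_comm (x y : Fin N) (F : Fin N → Fin N → ℝ) :
    avg G y (fun l => avg G x (fun k => F l k))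
      = avg G x (fun k => avg G y (fun l => F l k)) := by
  simp only [avg, Finset.mul_sum]
  rw [Finset.sum_comm]
  exact Finset.sum_congr rfl (fun k _ => Finset.sum_congr rfl (fun l _ => by ring))

/-- every vertex of a connected graph on ≥ 2 vertices has positive degree -/
lemma deg_pos (hN : 2 ≤ N) (hconn : G.Connected) (v : Fin N) : 0 < G.degree v := by
  have h01 : (⟨0, by omega⟩ : Fin N) ≠ (⟨1, by omega⟩ : Fin N) := by
    intro h; simpa using congrArg Fin.val h
  have hvu : ∃ u, u ≠ v := by
    rcases eq_or_ne (⟨0, by omega⟩ : Fin N) v with h | h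
    · exact ⟨⟨1, by omega⟩, by rw [← h]; exact (Ne.symm h01)⟩
    · exact ⟨⟨0, by omega⟩, h⟩
  obtain ⟨u, hu⟩ := hvu
  have hr : G.Reachable v u := hconn.preconnected v u
  refine hr.elim (fun w => ?_)
  cases w with
  | nil => exact absurd rfl (Ne.symm hu)
  | cons h p => exact (G.degree_pos_iff_exists_adj v).2 ⟨_, h⟩


section H
variable (hd : ∀ v : Fin N, 0 < G.degree v)
  (H : Fin N → Fin N → ℝ) (h0 : ∀ j, H j j = 0)
  (hh : ∀ i j, i ≠ j → H i j = 1 + avg G i (fun k => H k j))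

include hd h0 hh

/-- minimum principle: hitting times are nonnegative -/
lemma H_nonneg : ∀ i j, 0 ≤ H i j := by
  intro i j
  obtain ⟨x0, -, hx0⟩ := Finset.exists_min_image Finset.univ (fun v => H v j)
    ⟨j, Finset.mem_univ j⟩
  have hmin : ∀ v, H x0 j ≤ H v j := fun v => hx0 v (Finset.mem_univ v)
  have hx0j : x0 = j := by
    by_contra hne
    have h1 : H x0 j = 1 + avg G x0 (fun k => H k j) := hh x0 j hne
    have h2 : H x0 j ≤ avg G x0 (fun k => H k j) :=
      const_le_avg (hd x0) (fun k _ => hmin k)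
    linarith
  have : H x0 j = 0 := by rw [hx0j]; exact h0 j
  have := hmin i; linarith

lemma H_one : ∀ i j, i ≠ j → 1 ≤ H i j := by
  intro i j hij
  have h1 := hh i j hij
  have h2 : (0:ℝ) ≤ avg G i (fun k => H k j) :=
    const_le_avg (hd i) (fun k _ => H_nonneg hd H h0 hh k j)
  linarith

/-- the edge sum identity `∑_{l ~ y} H l y = 2E - deg y` -/
lemma edge_sum (y : Fin N) :
    ∑ l ∈ G.neighborFinset y, H l y = twoE G - (G.degree y : ℝ) := by
  classical
  -- multiply the harmonic relation by the degree
  have hmul : ∀ k, k ≠ y →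
      (G.degree k : ℝ) * H k y = (G.degree k : ℝ) + ∑ l ∈ G.neighborFinset k, H l y := by
    intro k hk
    have hdk : ((G.degree k : ℝ)) ≠ 0 := ne_of_gt (dcast_pos (hd k))
    rw [hh k y hk, mul_add, mul_one]
    congr 1
    rw [avg, Finset.mul_sum]
    refine Finset.sum_congr rfl (fun l _ => ?_)
    field_simp
  -- the weighted total
  set A : ℝ := ∑ k : Fin N, (G.degree k : ℝ) * H k y with hA
  -- double counting: ∑_k ∑_{l ~ k} H l y = ∑_l deg l * H l y
  have hswap : ∑ k : Fin N, ∑ l ∈ G.neighborFinset k, H l y = A := by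
    have h1 : ∀ k : Fin N, ∑ l ∈ G.neighborFinset k, H l y
        = ∑ l : Fin N, if G.Adj k l then H l y else 0 := by
      intro k
      rw [show G.neighborFinset k = Finset.univ.filter (G.Adj k) by
        ext; simp [SimpleGraph.mem_neighborFinset]]
      exact Finset.sum_filter _ _
    calc ∑ k : Fin N, ∑ l ∈ G.neighborFinset k, H l y
        = ∑ k : Fin N, ∑ l : Fin N, if G.Adj k l then H l y else 0 :=
          Finset.sum_congr rfl (fun k _ => h1 k)
      _ = ∑ l : Fin N, ∑ k : Fin N, if G.Adj k l then H l y else 0 := Finset.sum_comm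
      _ = A := by
          refine Finset.sum_congr rfl (fun l _ => ?_)
          have : ∑ k : Fin N, (if G.Adj k l then H l y else 0)
              = ∑ k ∈ Finset.univ.filter (fun k => G.Adj k l), H l y :=
            (Finset.sum_filter _ _).symm
          rw [this, Finset.sum_const, nsmul_eq_mul]
          congr 1
          have : Finset.univ.filter (fun k => G.Adj k l) = G.neighborFinset l := by
            ext k; simp [SimpleGraph.mem_neighborFinset, SimpleGraph.adj_comm]
          rw [this, G.card_neighborFinset_eq_degree]
  -- sum the multiplied relation over k ≠ y
  have hy0 : (G.degree y : ℝ) * H y y = 0 := by rw [h0 y]; ring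
  have hAerase : A = ∑ k ∈ Finset.univ.erase y, (G.degree k : ℝ) * H k y := by
    rw [hA, ← Finset.add_sum_erase _ _ (Finset.mem_univ y), hy0, zero_add]
  have hBerase : ∑ k ∈ Finset.univ.erase y, ((G.degree k : ℝ) + ∑ l ∈ G.neighborFinset k, H l y)
      = (twoE G - (G.degree y : ℝ)) + (A - ∑ l ∈ G.neighborFinset y, H l y) := by
    rw [Finset.sum_add_distrib]
    congr 1
    · rw [eq_sub_iff_add_eq, twoE, ← Finset.add_sum_erase _ _ (Finset.mem_univ y)]
      ring
    · rw [eq_sub_iff_add_eq, ← hswap, ← Finset.add_sum_erase _ _ (Finset.mem_univ y)]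
      ring
  have hfin : ∑ k ∈ Finset.univ.erase y, (G.degree k : ℝ) * H k y
      = ∑ k ∈ Finset.univ.erase y, ((G.degree k : ℝ) + ∑ l ∈ G.neighborFinset k, H l y) :=
    Finset.sum_congr rfl (fun k hk => hmul k (Finset.ne_of_mem_erase hk))
  linarith [hAerase, hfin, hBerase]

/-- downward average: `avg_y H(·,k) = H y k - 1 + [k = y]·2E/deg y` -/
lemma avg_down (y k : Fin N) :
    avg G y (fun l => H l k) = H y k - 1 + (if k = y then twoE G / (G.degree y : ℝ) else 0) := by
  rcases eq_or_ne y k with h | h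
  · subst h
    rw [if_pos rfl, h0 y]
    have hdy : ((G.degree y : ℝ)) ≠ 0 := ne_of_gt (dcast_pos (hd y))
    rw [avg, ← Finset.mul_sum, edge_sum hd H h0 hh y]
    field_simp
    ring
  · rw [if_neg (Ne.symm h)]
    have := hh y k h
    linarith

end H
section MP
variable (hconn : G.Connected) (hd : ∀ v : Fin N, 0 < G.degree v)
include hconn hd

/-- maximum principle: a function harmonic away from `x`, nonpositive at `x`,
is nonpositive everywhere. -/
lemma mp_le (h : Fin N → ℝ) (x : Fin N) (hx : h x ≤ 0)
    (hharm : ∀ y, y ≠ x → h y = avg G y h) : ∀ y, h y ≤ 0 := by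
  obtain ⟨y0, -, hy0⟩ := Finset.exists_max_image Finset.univ h ⟨x, Finset.mem_univ x⟩
  have hmax : ∀ v, h v ≤ h y0 := fun v => hy0 v (Finset.mem_univ v)
  have key : ∀ (u v : Fin N) (w : G.Walk u v), h v ≤ 0 →
      (∀ y, y ≠ v → h y = avg G y h) → h u = h y0 → h u ≤ 0 := by
    intro u v w
    induction w with
    | nil => intro hv _ _; exact hv
    | @cons a b c hab p ih =>
      intro hv hharm' heq
      by_cases hax : a = c
      · rw [hax]; exact hv
      · have hharma := hharm' a hax
        have hzero : ∑ k ∈ G.neighborFinset a, (1 / (G.degree a : ℝ)) * (h y0 - h k) = 0 := by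
          have h1 : ∑ k ∈ G.neighborFinset a, (1 / (G.degree a : ℝ)) * (h y0 - h k)
              = avg G a (fun _ => h y0) - avg G a h := by
            rw [avg, avg, ← Finset.sum_sub_distrib]
            exact Finset.sum_congr rfl (fun k _ => by ring)
          rw [h1, avg_const (hd a), ← hharma, heq]
          ring
        have hball : ∀ k ∈ G.neighborFinset a, (1 / (G.degree a : ℝ)) * (h y0 - h k) = 0 := by
          refine (Finset.sum_eq_zero_iff_of_nonneg (fun k _ => ?_)).1 hzero
          have h2 : 0 ≤ h y0 - h k := by linarith [hmax k]
          positivity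
        have hda : (0:ℝ) < 1 / (G.degree a : ℝ) := by
          have := dcast_pos (hd a); positivity
        have hb : h b = h y0 := by
          have hbmem : b ∈ G.neighborFinset a := (G.mem_neighborFinset a b).2 hab
          have h3 := (mul_eq_zero.mp (hball b hbmem)).resolve_left (ne_of_gt hda)
          linarith
        have := ih hv hharm' hb
        linarith
  intro y
  have hy00 : h y0 ≤ 0 := (hconn.preconnected y0 x).elim (fun w => key y0 x w hx hharm rfl)
  exact le_trans (hmax y) hy00

lemma mp_eq (h : Fin N → ℝ) (x : Fin N) (hx : h x = 0)
    (hharm : ∀ y, y ≠ x → h y = avg G y h) : ∀ y, h y = 0 := by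
  have h1 := mp_le hconn hd h x (le_of_eq hx) hharm
  have h2 := mp_le hconn hd (fun v => -h v) x (by show -h x ≤ 0; rw [hx]; norm_num)
    (fun y hy => by
      have := hharm y hy
      have hneg : avg G y (fun v => -h v) = - avg G y h := by
        have : avg G y (fun v => -h v) = avg G y (fun v => (-1) * h v) := by
          refine avg_congr y (fun k _ => by ring)
        rw [this, avg_smul]; ring
      rw [hneg, ← this])
  intro y
  have := h1 y
  have h2y := h2 y
  simp only [neg_nonpos] at h2y
  linarith

/-- pair version: subharmonic on off-diagonal pairs, nonpositive on the diagonal. -/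
lemma mp_pair (g : Fin N → Fin N → ℝ) (hdiag : ∀ v, g v v ≤ 0)
    (hsub : ∀ x y, x ≠ y → g x y ≤
      (1/2) * avg G x (fun k => g k y) + (1/2) * avg G y (fun k => g x k)) :
    ∀ x y, g x y ≤ 0 := by
  intro x y
  obtain ⟨p0, -, hp0⟩ := Finset.exists_max_image (Finset.univ : Finset (Fin N × Fin N))
    (fun p => g p.1 p.2) ⟨(x, y), Finset.mem_univ _⟩
  have hmax : ∀ a b, g a b ≤ g p0.1 p0.2 := fun a b => hp0 (a, b) (Finset.mem_univ _)
  have key : ∀ (u v : Fin N) (w : G.Walk u v), g u v = g p0.1 p0.2 → g u v ≤ 0 := by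
    intro u v w
    induction w with
    | nil => intro _; exact hdiag _
    | @cons a b c hab p ih =>
      intro heq
      by_cases hac : a = c
      · rw [hac]; exact hdiag c
      · have hS1 : avg G a (fun k => g k c) ≤ g p0.1 p0.2 :=
          avg_le_const (hd a) (fun k _ => hmax k c)
        have hS2 : avg G c (fun k => g a k) ≤ g p0.1 p0.2 :=
          avg_le_const (hd c) (fun k _ => hmax a k)
        have hs := hsub a c hac
        have hS1eq : avg G a (fun k => g k c) = g p0.1 p0.2 := by linarith
        have hzero : ∑ k ∈ G.neighborFinset a,
            (1 / (G.degree a : ℝ)) * (g p0.1 p0.2 - g k c) = 0 := by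
          have h1 : ∑ k ∈ G.neighborFinset a, (1 / (G.degree a : ℝ)) * (g p0.1 p0.2 - g k c)
              = avg G a (fun _ => g p0.1 p0.2) - avg G a (fun k => g k c) := by
            rw [avg, avg, ← Finset.sum_sub_distrib]
            exact Finset.sum_congr rfl (fun k _ => by ring)
          rw [h1, avg_const (hd a), hS1eq]
          ring
        have hball := (Finset.sum_eq_zero_iff_of_nonneg (fun k _ => by
          have h2 : 0 ≤ g p0.1 p0.2 - g k c := by linarith [hmax k c]
          positivity)).1 hzero
        have hda : (0:ℝ) < 1 / (G.degree a : ℝ) := by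
          have := dcast_pos (hd a); positivity
        have hb : g b c = g p0.1 p0.2 := by
          have hbmem : b ∈ G.neighborFinset a := (G.mem_neighborFinset a b).2 hab
          have h3 := (mul_eq_zero.mp (hball b hbmem)).resolve_left (ne_of_gt hda)
          linarith
        have := ih hb
        linarith
  have hm0 : g p0.1 p0.2 ≤ 0 :=
    (hconn.preconnected p0.1 p0.2).elim (fun w => key p0.1 p0.2 w rfl)
  exact le_trans (hmax x y) hm0

end MP
section Rev
variable (hconn : G.Connected) (hd : ∀ v : Fin N, 0 < G.degree v)
  (H : Fin N → Fin N → ℝ) (h0 : ∀ j, H j j = 0)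
  (hh : ∀ i j, i ≠ j → H i j = 1 + avg G i (fun k => H k j))
include hconn hd h0 hh

/-- the reversibility identity:
`avg_{k~x} H y k = H y x + avg_{k~x} H x k - 2E/deg x` for `y ≠ x`. -/
lemma rev (x : Fin N) : ∀ y, y ≠ x →
    avg G x (fun k => H y k)
      = H y x + avg G x (fun k => H x k) - twoE G / (G.degree x : ℝ) := by
  classical
  set S : Fin N → ℝ := fun v => avg G x (fun k => H v k) with hS
  set C : ℝ := S x - twoE G / (G.degree x : ℝ) with hC
  set h : Fin N → ℝ := fun v => if v = x then 0 else S v - H v x - C with hhdef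
  have hpoint : ∀ l, h l = S l - H l x - C - (if l = x then twoE G / (G.degree x : ℝ) else 0) := by
    intro l
    rcases eq_or_ne l x with rfl | hlx
    · simp only [hhdef, if_pos rfl, hC, h0 l]
      norm_num
    · simp only [hhdef, if_neg hlx]
      ring
  have hharm : ∀ y, y ≠ x → h y = avg G y h := by
    intro y hyx
    have havgS : avg G y S = S y - 1
        + (if y ∈ G.neighborFinset x then (1 / (G.degree x : ℝ)) * (twoE G / (G.degree y : ℝ)) else 0) := by
      have e1 : avg G y S = avg G x (fun k => avg G y (fun l => H l k)) := by
        rw [hS]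
        exact avg_avg_comm x y (fun l k => H l k)
      have e2 : avg G x (fun k => avg G y (fun l => H l k))
          = avg G x (fun k => H y k - 1 + (if k = y then twoE G / (G.degree y : ℝ) else 0)) :=
        avg_congr x (fun k _ => avg_down hd H h0 hh y k)
      have e3a := avg_add (G:=G) x (fun k => H y k - 1)
        (fun k => if k = y then twoE G / (G.degree y : ℝ) else 0)
      have e3b := avg_sub (G:=G) x (fun k => H y k) (fun _ => (1:ℝ))
      rw [e1, e2, e3a, e3b, avg_const (hd x), avg_ite]
    have havgHx : avg G y (fun l => H l x) = H y x - 1 := by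
      have := avg_down hd H h0 hh y x
      rwa [if_neg (Ne.symm hyx), add_zero] at this
    have hs1 := avg_sub (G:=G) y (fun l => S l - H l x - C)
      (fun l => if l = x then twoE G / (G.degree x : ℝ) else 0)
    have hs2 := avg_sub (G:=G) y (fun l => S l - H l x) (fun _ => C)
    have hs3 := avg_sub (G:=G) y (fun l => S l) (fun l => H l x)
    have hsplit : avg G y h = avg G y S - avg G y (fun l => H l x) - avg G y (fun _ => C)
        - avg G y (fun l => if l = x then twoE G / (G.degree x : ℝ) else 0) := by
      rw [avg_congr y (fun l _ => hpoint l), hs1, hs2, hs3]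
    have hmemb : (y ∈ G.neighborFinset x) = (x ∈ G.neighborFinset y) := by
      simp [SimpleGraph.mem_neighborFinset, SimpleGraph.adj_comm]
    have hvals : (1 / (G.degree x : ℝ)) * (twoE G / (G.degree y : ℝ))
        = (1 / (G.degree y : ℝ)) * (twoE G / (G.degree x : ℝ)) := by ring
    rw [hsplit, havgS, havgHx, avg_const (hd y), avg_ite]
    simp only [hmemb, hvals, hhdef, if_neg hyx]
    ring
  have hzero := mp_eq hconn hd h x (by simp [hhdef]) hharm
  intro y hyx
  have := hzero y
  simp only [hhdef, if_neg hyx] at this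
  have hgoal : S y - H y x - C = 0 := this
  rw [hC] at hgoal
  have : S y = H y x + S x - twoE G / (G.degree x : ℝ) := by linarith
  simpa [hS] using this

/-- the one-step relation for the antisymmetric part `A x y = H x y - H y x` -/
lemma keyA (x y : Fin N) :
    H x y - H y x = avg G x (fun k => H k y - H y k)
      + (1 + avg G x (fun k => H x k) - twoE G / (G.degree x : ℝ)) := by
  have e3 := avg_sub (G:=G) x (fun k => H k y) (fun k => H y k)
  rcases eq_or_ne x y with rfl | hxy
  · have d1 := avg_down hd H h0 hh x x
    rw [if_pos rfl, h0 x] at d1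
    linarith
  · have e1 := hh x y hxy
    have e2 := rev hconn hd H h0 hh x y (Ne.symm hxy)
    linarith

/-- cycle identity: the antisymmetric part of `H` is a potential difference. -/
lemma cycleA (z0 : Fin N) (v y : Fin N) :
    H v y - H y v = (H v z0 - H z0 v) - (H y z0 - H z0 y) := by
  classical
  set c0 : ℝ := H z0 y - H y z0 with hc0
  set h : Fin N → ℝ := fun v => (H v y - H y v) - (H v z0 - H z0 v) - c0 with hhdef
  have hz0 : h z0 = 0 := by
    simp only [hhdef, hc0, h0 z0]
    ring
  have hharm : ∀ w, w ≠ z0 → h w = avg G w h := by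
    intro w _
    have k1 := keyA hconn hd H h0 hh w y
    have k2 := keyA hconn hd H h0 hh w z0
    have e1 := avg_sub (G:=G) w (fun k => H k y - H y k) (fun k => H k z0 - H z0 k)
    have e2 : avg G w (fun k => (H k y - H y k) - (H k z0 - H z0 k))
        = avg G w (fun k => h k + c0) := by
      refine avg_congr w (fun k _ => ?_)
      simp only [hhdef]
      ring
    have e3 := avg_add (G:=G) w h (fun _ => c0)
    have e4 := avg_const (G:=G) (hd w) c0
    simp only [hhdef]
    have : avg G w (fun k => h k + c0) = avg G w h + c0 := by rw [e3, e4]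
    linarith
  have hzero := mp_eq hconn hd h z0 hz0 hharm
  have := hzero v
  simp only [hhdef] at this
  linarith

end Rev
end MeetingAux

open MeetingAux

/-- Two tokens on a fixed undirected connected graph on `N ≥ 2` vertices: at each
step one of the two tokens is chosen with probability `1/N` each (so the pair
stays put with probability `1 - 2/N`) and the chosen token moves to a uniformly
random neighbor. The expected meeting times `M` (characterized by their harmonic
system, with `M(i,i) = 0`) satisfy `M(i,j) ≤ 2N·H_SF − N`, where `H_SF` is any
upper bound on the hitting times of the simple random walk on the graph. -/
theorem meeting_time_le_two_N_hitting (N : ℕ) (hN : 2 ≤ N)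
    (G : SimpleGraph (Fin N)) [DecidableRel G.Adj] (hconn : G.Connected)
    (HSF : Fin N → Fin N → ℝ)
    (hSF0 : ∀ j, HSF j j = 0)
    (hSF : ∀ i j, i ≠ j →
      HSF i j = 1 + ∑ k ∈ G.neighborFinset i, (1 / (G.degree i : ℝ)) * HSF k j)
    (Hmax : ℝ) (hHmax : ∀ i j, HSF i j ≤ Hmax)
    (M : Fin N → Fin N → ℝ)
    (hM0 : ∀ i, M i i = 0)
    (hM : ∀ i j, i ≠ j →
      M i j = 1 + (1 - 2 / (N : ℝ)) * M i j
        + ∑ k ∈ G.neighborFinset i, (1 / ((N : ℝ) * G.degree i)) * M k j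
        + ∑ k ∈ G.neighborFinset j, (1 / ((N : ℝ) * G.degree j)) * M i k) :
    ∀ i j, M i j ≤ 2 * N * Hmax - N := by
  classical
  have hd : ∀ v : Fin N, 0 < G.degree v := deg_pos hN hconn
  set H := HSF with hH
  have hh : ∀ i j, i ≠ j → H i j = 1 + avg G i (fun k => H k j) := hSF
  have hnn : ∀ i j, 0 ≤ H i j := H_nonneg hd H hSF0 hh
  have hone : ∀ i j, i ≠ j → 1 ≤ H i j := H_one hd H hSF0 hh
  -- `Hmax ≥ 1`
  have hmax1 : (1:ℝ) ≤ Hmax := by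
    have h01 : (⟨0, by omega⟩ : Fin N) ≠ (⟨1, by omega⟩ : Fin N) := by
      intro h; simpa using congrArg Fin.val h
    exact le_trans (hone _ _ h01) (hHmax _ _)
  -- the potential
  set z0 : Fin N := ⟨0, by omega⟩ with hz0
  set ψ : Fin N → ℝ := fun v => H v z0 - H z0 v with hψ
  obtain ⟨z, -, hz⟩ := Finset.exists_min_image Finset.univ ψ ⟨z0, Finset.mem_univ z0⟩
  set γ : Fin N → ℝ := fun v => (H v z - H z v) / 2 with hγ
  have hγnn : ∀ v, 0 ≤ γ v := by
    intro v
    have hcyc := cycleA hconn hd H hSF0 hh z0 v z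
    have := hz v (Finset.mem_univ v)
    simp only [hγ]
    simp only [hψ] at this
    linarith
  have hγle : ∀ v, γ v ≤ Hmax / 2 := by
    intro v
    have h1 := hHmax v z
    have h2 := hnn z v
    simp only [hγ]
    linarith
  have hγpois : ∀ v, γ v = avg G v γ
      + (1 + avg G v (fun k => H v k) - twoE G / (G.degree v : ℝ)) / 2 := by
    intro v
    have k1 := keyA hconn hd H hSF0 hh v z
    have e1 : avg G v γ = avg G v (fun k => (1/2) * (H k z - H z k)) := by
      refine avg_congr v (fun k _ => ?_)
      simp only [hγ]; ring
    rw [e1, avg_smul]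
    simp only [hγ]
    linarith
  -- the supersolution
  set Φ : Fin N → Fin N → ℝ :=
    fun x y => if x = y then 0 else (H x y + H y x) / 2 + γ x + γ y with hΦ
  have hΦsup : ∀ x y, x ≠ y →
      1 + (1/2) * avg G x (fun k => Φ k y) + (1/2) * avg G y (fun k => Φ x k) ≤ Φ x y := by
    intro x y hxy
    -- average over moves of the first token
    have havg1 : avg G x (fun k => Φ k y) = Φ x y - 1
        - (if y ∈ G.neighborFinset x then (1 / (G.degree x : ℝ)) * (2 * γ y) else 0) := by
      have hpoint : ∀ k, Φ k y = (H k y + H y k) / 2 + γ k + γ y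
          - (if k = y then 2 * γ y else 0) := by
        intro k
        rcases eq_or_ne k y with rfl | hky
        · simp only [hΦ, hSF0 k, eq_self_iff_true, if_true]
          ring
        · simp only [hΦ, if_neg hky]
          ring
      have e0 : avg G x (fun k => Φ k y)
          = avg G x (fun k => (H k y + H y k) / 2 + γ k + γ y)
            - avg G x (fun k => if k = y then 2 * γ y else 0) := by
        rw [← avg_sub]
        exact avg_congr x (fun k _ => hpoint k)
      have e1 : avg G x (fun k => (H k y + H y k) / 2 + γ k + γ y)
          = avg G x (fun k => (H k y + H y k) / 2 + γ k) + avg G x (fun _ => γ y) := by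
        exact avg_add (G:=G) x _ _
      have e2 : avg G x (fun k => (H k y + H y k) / 2 + γ k)
          = avg G x (fun k => (H k y + H y k) / 2) + avg G x γ := avg_add (G:=G) x _ _
      have e3 : avg G x (fun k => (H k y + H y k) / 2)
          = avg G x (fun k => (1/2) * (H k y + H y k)) :=
        avg_congr x (fun k _ => by ring)
      have e4 : avg G x (fun k => H k y + H y k)
          = avg G x (fun k => H k y) + avg G x (fun k => H y k) := avg_add (G:=G) x _ _
      have e5 : avg G x (fun k => H k y) = H x y - 1 := by
        have := avg_down hd H hSF0 hh x y
        rwa [if_neg (Ne.symm hxy), add_zero] at this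
      have e6 : avg G x (fun k => H y k)
          = H y x + avg G x (fun k => H x k) - twoE G / (G.degree x : ℝ) :=
        rev hconn hd H hSF0 hh x y (Ne.symm hxy)
      have e7 := avg_ite (G:=G) x y (2 * γ y)
      have e8 := hγpois x
      rw [e0, e1, e2, e3, avg_smul, e4, e5, e6, e7, avg_const (hd x)]
      simp only [hΦ, if_neg hxy]
      linarith
    have havg2 : avg G y (fun k => Φ x k) = Φ x y - 1
        - (if x ∈ G.neighborFinset y then (1 / (G.degree y : ℝ)) * (2 * γ x) else 0) := by
      have hpoint : ∀ k, Φ x k = (H x k + H k x) / 2 + γ x + γ k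
          - (if k = x then 2 * γ x else 0) := by
        intro k
        rcases eq_or_ne k x with rfl | hkx
        · simp only [hΦ, hSF0 k, eq_self_iff_true, if_true]
          ring
        · have hxk : x ≠ k := Ne.symm hkx
          simp only [hΦ, if_neg hxk, if_neg hkx]
          ring
      have e0 : avg G y (fun k => Φ x k)
          = avg G y (fun k => (H x k + H k x) / 2 + γ x + γ k)
            - avg G y (fun k => if k = x then 2 * γ x else 0) := by
        rw [← avg_sub]
        exact avg_congr y (fun k _ => hpoint k)
      have e1 : avg G y (fun k => (H x k + H k x) / 2 + γ x + γ k)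
          = avg G y (fun k => (H x k + H k x) / 2 + γ x) + avg G y γ := avg_add (G:=G) y _ _
      have e2 : avg G y (fun k => (H x k + H k x) / 2 + γ x)
          = avg G y (fun k => (H x k + H k x) / 2) + avg G y (fun _ => γ x) :=
        avg_add (G:=G) y _ _
      have e3 : avg G y (fun k => (H x k + H k x) / 2)
          = avg G y (fun k => (1/2) * (H x k + H k x)) :=
        avg_congr y (fun k _ => by ring)
      have e4 : avg G y (fun k => H x k + H k x)
          = avg G y (fun k => H x k) + avg G y (fun k => H k x) := avg_add (G:=G) y _ _
      have e5 : avg G y (fun k => H k x) = H y x - 1 := by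
        have := avg_down hd H hSF0 hh y x
        rwa [if_neg hxy, add_zero] at this
      have e6 : avg G y (fun k => H x k)
          = H x y + avg G y (fun k => H y k) - twoE G / (G.degree y : ℝ) :=
        rev hconn hd H hSF0 hh y x hxy
      have e7 := avg_ite (G:=G) y x (2 * γ x)
      have e8 := hγpois y
      rw [e0, e1, e2, e3, avg_smul, e4, e5, e6, e7, avg_const (hd y)]
      simp only [hΦ, if_neg hxy]
      linarith
    have hh1 : (0:ℝ) ≤ (if y ∈ G.neighborFinset x then (1 / (G.degree x : ℝ)) * (2 * γ y) else 0) := by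
      split
      · have := hγnn y
        positivity
      · exact le_rfl
    have hh2 : (0:ℝ) ≤ (if x ∈ G.neighborFinset y then (1 / (G.degree y : ℝ)) * (2 * γ x) else 0) := by
      split
      · have := hγnn x
        positivity
      · exact le_rfl
    linarith
  -- rearranged equation for M
  have hNR : (2:ℝ) ≤ (N:ℝ) := by exact_mod_cast hN
  have hNpos : (0:ℝ) < (N:ℝ) := by linarith
  have hMeq : ∀ x y, x ≠ y → M x y = (N:ℝ)/2
      + (1/2) * avg G x (fun k => M k y) + (1/2) * avg G y (fun k => M x k) := by
    intro x y hxy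
    have heq := hM x y hxy
    have hA1 : ∑ k ∈ G.neighborFinset x, (1/((N:ℝ) * G.degree x)) * M k y
        = (1/(N:ℝ)) * avg G x (fun k => M k y) := by
      rw [avg, Finset.mul_sum]
      exact Finset.sum_congr rfl (fun k _ => by ring)
    have hA2 : ∑ k ∈ G.neighborFinset y, (1/((N:ℝ) * G.degree y)) * M x k
        = (1/(N:ℝ)) * avg G y (fun k => M x k) := by
      rw [avg, Finset.mul_sum]
      exact Finset.sum_congr rfl (fun k _ => by ring)
    rw [hA1, hA2] at heq
    have hN0 : (N:ℝ) ≠ 0 := ne_of_gt hNpos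
    have h2 : 2 * M x y = (N:ℝ) + avg G x (fun k => M k y) + avg G y (fun k => M x k) := by
      field_simp at heq
      linarith
    linarith
  -- comparison with the supersolution
  have hcomp : ∀ x y, M x y - (N:ℝ)/2 * Φ x y ≤ 0 := by
    refine mp_pair hconn hd (fun x y => M x y - (N:ℝ)/2 * Φ x y) (fun v => ?_) ?_
    · simp only [hΦ, if_pos rfl, hM0 v]
      ring_nf
      exact le_rfl
    · intro x y hxy
      have s1 : avg G x (fun k => M k y - (N:ℝ)/2 * Φ k y)
          = avg G x (fun k => M k y) - (N:ℝ)/2 * avg G x (fun k => Φ k y) := by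
        rw [avg_sub (G:=G) x (fun k => M k y) (fun k => (N:ℝ)/2 * Φ k y), avg_smul]
      have s2 : avg G y (fun k => M x k - (N:ℝ)/2 * Φ x k)
          = avg G y (fun k => M x k) - (N:ℝ)/2 * avg G y (fun k => Φ x k) := by
        rw [avg_sub (G:=G) y (fun k => M x k) (fun k => (N:ℝ)/2 * Φ x k), avg_smul]
      have hsup := hΦsup x y hxy
      have hmul := mul_le_mul_of_nonneg_left hsup (by linarith : (0:ℝ) ≤ (N:ℝ)/2)
      have hMe := hMeq x y hxy
      simp only [s1, s2]
      nlinarith [hmul, hMe]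
  -- conclusion
  intro i j
  rcases eq_or_ne i j with rfl | hij
  · rw [hM0 i]
    nlinarith [mul_nonneg (by linarith : (0:ℝ) ≤ (N:ℝ)) (by linarith : (0:ℝ) ≤ Hmax - 1)]
  · have h1 := hcomp i j
    have hΦle : Φ i j ≤ 2 * Hmax := by
      have g1 := hγle i
      have g2 := hγle j
      have g3 := hHmax i j
      have g4 := hHmax j i
      simp only [hΦ, if_neg hij]
      linarith
    have h2 := mul_le_mul_of_nonneg_left hΦle (by linarith : (0:ℝ) ≤ (N:ℝ)/2)
    nlinarith [mul_nonneg (by linarith : (0:ℝ) ≤ (N:ℝ)) (by linarith : (0:ℝ) ≤ Hmax - 1)]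
end

section
/- For a reversible irreducible finite Markov chain, the relation on states defined by i ≤ j iff H(i,j) ≤ H(j,i) is total and transitive (a total pre-order); consequently there exists a 'hidden' state u such that H(v,u) ≥ H(u,v) for every state v. -/
/-- For hitting times `H` of a finite irreducible reversible Markov chain
(which satisfy the cycle identity), the relation `i ≤ j ↔ H(i,j) ≤ H(j,i)` is
total and transitive (a total pre-order); consequently there exists a "hidden"
state `u` with `H(v,u) ≥ H(u,v)` for every state `v`. -/
theorem hidden_state_exists {S : Type*} [Fintype S] [Nonempty S]
    (H : S → S → ℝ)
    (hcycle : ∀ i j k, H i j + H j k + H k i = H i k + H k j + H j i) :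
    (∀ i j, H i j ≤ H j i ∨ H j i ≤ H i j) ∧
    (∀ i j k, H i j ≤ H j i → H j k ≤ H k j → H i k ≤ H k i) ∧
    (∃ u, ∀ v, H u v ≤ H v u) := by
  refine ⟨fun i j => le_total _ _, ?_, ?_⟩
  · intro i j k hij hjk
    have := hcycle i j k
    linarith
  · obtain ⟨o⟩ := (inferInstance : Nonempty S)
    obtain ⟨u, _, hu⟩ := Finset.exists_min_image Finset.univ
      (fun i => H i o - H o i) ⟨o, Finset.mem_univ o⟩
    refine ⟨u, fun v => ?_⟩
    have h1 := hu v (Finset.mem_univ v)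
    have h2 := hcycle u v o
    linarith
end

section
/- Under the quantized gossip update with x_i ≥ x_j both multiples of Δ: if x_i − x_j = Δ (trivial average), then the update swaps the two values and the quantity V(x) = ∑_k (x_k − α)² is unchanged for any α; if x_i − x_j > Δ (non-trivial average), then V(x) decreases by at least 2Δ². -/
open Finset

lemma sum_sq_two_update (n : ℕ) (x : Fin n → ℝ) (i j : Fin n) (hij : i ≠ j)
    (a b α : ℝ) :
    ∑ k, ((Function.update (Function.update x i a) j b) k - α) ^ 2
      = ∑ k, (x k - α) ^ 2 + ((a - α) ^ 2 - (x i - α) ^ 2)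
        + ((b - α) ^ 2 - (x j - α) ^ 2) := by
  set f : Fin n → ℝ := fun k => ((Function.update (Function.update x i a) j b) k - α) ^ 2
  set g : Fin n → ℝ := fun k => (x k - α) ^ 2
  have hfi : f i = (a - α) ^ 2 := by
    simp [f, Function.update_of_ne hij, Function.update_self]
  have hfj : f j = (b - α) ^ 2 := by
    simp [f, Function.update_self]
  have hsub : ∑ k, (f k - g k) = ∑ k ∈ ({i, j} : Finset (Fin n)), (f k - g k) := by
    refine (Finset.sum_subset (Finset.subset_univ _) ?_).symm
    intro k _ hk
    simp only [Finset.mem_insert, Finset.mem_singleton, not_or] at hk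
    have : f k = g k := by
      simp [f, g, Function.update_of_ne hk.2, Function.update_of_ne hk.1]
    simp [this]
  have hpair : ∑ k ∈ ({i, j} : Finset (Fin n)), (f k - g k)
      = (f i - g i) + (f j - g j) := Finset.sum_pair hij
  have hdist : ∑ k, (f k - g k) = (∑ k, f k) - ∑ k, g k := Finset.sum_sub_distrib f g
  have : (∑ k, f k) - ∑ k, g k = (f i - g i) + (f j - g j) := by
    rw [← hdist, hsub, hpair]
  have hgi : g i = (x i - α) ^ 2 := rfl
  have hgj : g j = (x j - α) ^ 2 := rfl
  linarith [this]

/-- Under the quantized gossip update with `x i ≥ x j` both multiples of `Δ`: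
if `x i - x j = Δ` (trivial average) the update swaps the two values and
`V_α(x) = ∑ (x_k - α)²` is unchanged for every `α`; if `x i - x j > Δ`
(non-trivial average) then `V_α` decreases by at least `2Δ²`. -/
theorem quantized_update_lyapunov (n : ℕ) (Δ : ℝ) (hΔ : 0 < Δ)
    (x : Fin n → ℝ) (hmul : ∀ k, ∃ m : ℤ, x k = Δ * m)
    (i j : Fin n) (hij : i ≠ j) (hord : x j ≤ x i) (δ : ℝ)
    (hδ1 : (∃ k : ℤ, (x i - x j) / (2 * Δ) = (k : ℝ)) → δ = (x i - x j) / 2)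
    (hδ2 : (¬ ∃ k : ℤ, (x i - x j) / (2 * Δ) = (k : ℝ)) →
      δ = Δ * ⌊((x i - x j) / 2) / Δ⌋ + Δ)
    (x' : Fin n → ℝ)
    (hx' : x' = Function.update (Function.update x i (x i - δ)) j (x j + δ)) :
    (x i - x j = Δ →
      x' i = x j ∧ x' j = x i ∧
      ∀ α : ℝ, ∑ k, (x' k - α) ^ 2 = ∑ k, (x k - α) ^ 2) ∧
    (Δ < x i - x j →
      ∀ α : ℝ, ∑ k, (x' k - α) ^ 2 ≤ ∑ k, (x k - α) ^ 2 - 2 * Δ ^ 2) := by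
  have hΔ0 : Δ ≠ 0 := ne_of_gt hΔ
  obtain ⟨mi, hmi⟩ := hmul i
  obtain ⟨mj, hmj⟩ := hmul j
  set m : ℤ := mi - mj with hm
  have hd : x i - x j = Δ * m := by rw [hmi, hmj, hm]; push_cast; ring
  have hx'i : x' i = x i - δ := by
    rw [hx']; rw [Function.update_of_ne hij, Function.update_self]
  have hx'j : x' j = x j + δ := by rw [hx', Function.update_self]
  have hsum : ∀ α : ℝ, ∑ k, (x' k - α) ^ 2
      = ∑ k, (x k - α) ^ 2 + (2 * δ ^ 2 - 2 * δ * (x i - x j)) := by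
    intro α
    rw [hx', sum_sq_two_update n x i j hij _ _ α]
    ring
  constructor
  · intro heq
    have hm1 : m = 1 := by
      have h1 : Δ * (m : ℝ) = Δ * 1 := by rw [← hd, heq]; ring
      have h2 : (m : ℝ) = 1 := mul_left_cancel₀ hΔ0 h1
      exact_mod_cast h2
    have hpar : ¬ ∃ k : ℤ, (x i - x j) / (2 * Δ) = (k : ℝ) := by
      rintro ⟨k, hk⟩
      rw [heq] at hk
      have h2 : Δ / (2 * Δ) = (1 : ℝ) / 2 := by field_simp
      rw [h2] at hk
      have : (2 * k : ℤ) = (1 : ℤ) := by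
        have : (2 * k : ℝ) = 1 := by rw [← hk]; ring
        exact_mod_cast this
      omega
    have hδ : δ = Δ := by
      rw [hδ2 hpar, heq]
      have : Δ / 2 / Δ = (1 : ℝ) / 2 := by field_simp
      rw [this]
      norm_num
    refine ⟨by rw [hx'i, hδ]; linarith, by rw [hx'j, hδ]; linarith, ?_⟩
    intro α
    rw [hsum α, heq, hδ]
    ring
  · intro hgt
    have hm2 : 2 ≤ m := by
      have : Δ * 1 < Δ * m := by rw [← hd]; linarith
      have := lt_of_mul_lt_mul_left (by linarith : Δ * 1 < Δ * m) hΔ.le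
      exact_mod_cast this
    intro α
    rw [hsum α]
    have key : 2 * δ ^ 2 - 2 * δ * (x i - x j) ≤ - (2 * Δ ^ 2) := by
      by_cases hpar : ∃ k : ℤ, (x i - x j) / (2 * Δ) = (k : ℝ)
      · have hδ : δ = (x i - x j) / 2 := hδ1 hpar
        have hd2 : 2 * Δ ≤ x i - x j := by
          rw [hd]
          have : (2 : ℝ) ≤ (m : ℝ) := by exact_mod_cast hm2
          nlinarith
        rw [hδ]
        nlinarith [hd2, hΔ]
      · -- m is odd
        have hodd : m % 2 = 1 := by
          by_contra h
          have heven : m % 2 = 0 := by omega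
          obtain ⟨l, hl⟩ : ∃ l : ℤ, m = 2 * l := ⟨m / 2, by omega⟩
          exact hpar ⟨l, by rw [hd, hl]; push_cast; field_simp⟩
        obtain ⟨l, hl⟩ : ∃ l : ℤ, m = 2 * l + 1 := ⟨m / 2, by omega⟩
        have hl1 : 1 ≤ l := by omega
        have hfloor : ⌊((x i - x j) / 2) / Δ⌋ = l := by
          have : ((x i - x j) / 2) / Δ = (l : ℝ) + 1 / 2 := by
            rw [hd, hl]; push_cast; field_simp
          rw [this]
          rw [Int.floor_eq_iff]
          constructor <;> [linarith; push_cast] <;> linarith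
        have hδ : δ = Δ * (l + 1) := by
          rw [hδ2 hpar, hfloor]; push_cast; ring
        have hlR : (1 : ℝ) ≤ (l : ℝ) := by exact_mod_cast hl1
        rw [hδ, hd, hl]
        push_cast
        nlinarith [hΔ, hlR]
    linarith
end
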